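/- arXiv:1603.04178 — 3 statements merged into one kernel-verified Lean document; each statement's English description precedes it below -/
import Mathlib

section
/- Let r ∈ ℝ³, let K be a 6×n real matrix, let m, g ∈ ℝ, let I_c and M_j be 3×3 and n×n real matrices respectively. Define T := fromBlocks (X(r)) (X(r)*K) 0 1ₙ, M̄ := fromBlocks (fromBlocks (m•1₃) 0 0 I_c) 0 0 M_j (a block-diagonal (6+n)×(6+n) matrix), and M := Tᵀ * M̄ * T. Let e₃ ∈ ℝ^{6+n} be the vector whose third component (the third of the first six, i.e. index Sum.inl 2) is 1 and all other components are 0. Then the gravity vector G := g • (M *ᵥ e₃) satisfies (Tᵀ)⁻¹ *ᵥ G = (m*g) • e₃; i.e., the transformed gravity term is the constant vector m g e₃. -/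
open Matrix

/-- `S x` is the 3×3 skew-symmetric matrix with `S x *ᵥ y = x × y`. -/
def S (x : Fin 3 → ℝ) : Matrix (Fin 3) (Fin 3) ℝ :=
  !![0, -x 2, x 1; x 2, 0, -x 0; -x 1, x 0, 0]

/-- `X r = fromBlocks 1₃ (-S r) 0 1₃`. -/
def X (r : Fin 3 → ℝ) : Matrix (Fin 3 ⊕ Fin 3) (Fin 3 ⊕ Fin 3) ℝ :=
  Matrix.fromBlocks 1 (-(S r)) 0 1

theorem stmt_5 (n : ℕ) (r : Fin 3 → ℝ) (K : Matrix (Fin 3 ⊕ Fin 3) (Fin n) ℝ)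
    (m g : ℝ) (I_c : Matrix (Fin 3) (Fin 3) ℝ) (M_j : Matrix (Fin n) (Fin n) ℝ) :
    let T : Matrix ((Fin 3 ⊕ Fin 3) ⊕ Fin n) ((Fin 3 ⊕ Fin 3) ⊕ Fin n) ℝ :=
      Matrix.fromBlocks (X r) (X r * K) 0 1
    let Mbar : Matrix ((Fin 3 ⊕ Fin 3) ⊕ Fin n) ((Fin 3 ⊕ Fin 3) ⊕ Fin n) ℝ :=
      Matrix.fromBlocks
        (Matrix.fromBlocks (m • (1 : Matrix (Fin 3) (Fin 3) ℝ)) 0 0 I_c) 0 0 M_j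
    let M : Matrix ((Fin 3 ⊕ Fin 3) ⊕ Fin n) ((Fin 3 ⊕ Fin 3) ⊕ Fin n) ℝ := Tᵀ * Mbar * T
    let e₃ : ((Fin 3 ⊕ Fin 3) ⊕ Fin n) → ℝ :=
      fun i => if i = Sum.inl (Sum.inl 2) then 1 else 0
    let G : ((Fin 3 ⊕ Fin 3) ⊕ Fin n) → ℝ := g • (M *ᵥ e₃)
    (Tᵀ)⁻¹ *ᵥ G = (m * g) • e₃ := by
  intro T Mbar M e₃ G
  have he : e₃ = Sum.elim (Sum.elim (fun j : Fin 3 => if j = 2 then 1 else 0) 0) 0 := by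
    funext i
    rcases i with (j | j) | j <;> simp [e₃]
  have h1 : T *ᵥ e₃ = e₃ := by
    rw [he]
    simp [T, X, Matrix.fromBlocks_mulVec, Matrix.mulVec_zero, Matrix.one_mulVec,
      Matrix.zero_mulVec, add_zero, zero_add]
  have h2 : Mbar *ᵥ e₃ = m • e₃ := by
    rw [he]
    funext i
    rcases i with (j | j) | j <;>
      simp [Mbar, Matrix.fromBlocks_mulVec, Matrix.mulVec_zero, Matrix.one_mulVec,
        Matrix.zero_mulVec, Matrix.smul_mulVec]
  have hdet : IsUnit (Tᵀ).det := by
    have : T.det = 1 := by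
      simp [T, X, Matrix.det_fromBlocks_zero₂₁]
    simp [Matrix.det_transpose, this]
  show (Tᵀ)⁻¹ *ᵥ (g • ((Tᵀ * Mbar * T) *ᵥ e₃)) = (m * g) • e₃
  rw [Matrix.mul_assoc, ← Matrix.mulVec_mulVec, ← Matrix.mulVec_mulVec, h1, h2,
    Matrix.mulVec_smul, Matrix.mulVec_smul, Matrix.mulVec_smul, Matrix.mulVec_mulVec,
    Matrix.nonsing_inv_mul _ hdet, Matrix.one_mulVec, smul_smul, mul_comm g m]
end

section
/- Let M_b be an invertible 6×6 real matrix and M_j an invertible n×n real matrix, and set M := fromBlocks M_b 0 0 M_j. Let J_b be a 6×6 real matrix and J_j a 6×n real matrix, and let J := (J_b J_j) be the corresponding 6×(6+n) matrix. Let h ∈ ℝ^{6+n}, f ∈ ℝ⁶, τ ∈ ℝⁿ, d ∈ ℝ⁶, and define the acceleration ν̇ := M⁻¹ *ᵥ (Sum.elim 0 τ + Jᵀ *ᵥ f - h) and Λ := J_j * M_j⁻¹. Then J *ᵥ ν̇ + d = 0 if and only if Λ *ᵥ τ = J *ᵥ (M⁻¹ *ᵥ (h - Jᵀ *ᵥ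 f)) - d. -/
open Matrix

theorem stmt_9 (n : ℕ)
    (M_b : Matrix (Fin 6) (Fin 6) ℝ) (hMb : IsUnit M_b)
    (M_j : Matrix (Fin n) (Fin n) ℝ) (hMj : IsUnit M_j)
    (J_b : Matrix (Fin 6) (Fin 6) ℝ) (J_j : Matrix (Fin 6) (Fin n) ℝ)
    (h : (Fin 6 ⊕ Fin n) → ℝ) (f : Fin 6 → ℝ) (τ : Fin n → ℝ) (d : Fin 6 → ℝ) :
    let M : Matrix (Fin 6 ⊕ Fin n) (Fin 6 ⊕ Fin n) ℝ := Matrix.fromBlocks M_b 0 0 M_j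
    let J : Matrix (Fin 6) (Fin 6 ⊕ Fin n) ℝ := Matrix.fromCols J_b J_j
    let νdot : (Fin 6 ⊕ Fin n) → ℝ := M⁻¹ *ᵥ (Sum.elim (0 : Fin 6 → ℝ) τ + Jᵀ *ᵥ f - h)
    let Λ : Matrix (Fin 6) (Fin n) ℝ := J_j * M_j⁻¹
    J *ᵥ νdot + d = 0 ↔ Λ *ᵥ τ = J *ᵥ (M⁻¹ *ᵥ (h - Jᵀ *ᵥ f)) - d := by
  intro M J νdot Λ
  have hM : M⁻¹ = Matrix.fromBlocks M_b⁻¹ 0 0 M_j⁻¹ := by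
    have := Matrix.inv_fromBlocks_zero₂₁_of_isUnit_iff M_b 0 M_j (iff_of_true hMb hMj)
    simpa using this
  have key : J *ᵥ (M⁻¹ *ᵥ Sum.elim (0 : Fin 6 → ℝ) τ) = Λ *ᵥ τ := by
    rw [hM]
    simp [J, Λ, Matrix.fromBlocks_mulVec, Matrix.mulVec_mulVec]
  have hν : νdot = M⁻¹ *ᵥ Sum.elim (0 : Fin 6 → ℝ) τ - M⁻¹ *ᵥ (h - Jᵀ *ᵥ f) := by
    show M⁻¹ *ᵥ _ = _
    rw [← Matrix.mulVec_sub]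
    abel_nf
  rw [hν, Matrix.mulVec_sub, key, sub_add, sub_eq_zero]
end

section
/- Let K_p and K_i be symmetric positive definite n×n real matrices. Then every complex eigenvalue λ of the 2n×2n real block matrix A := fromBlocks (-K_p) (-K_i) 1ₙ 0 has strictly negative real part; i.e., the closed-loop linear momentum-error dynamics (Ḣ̃, İ) = (-K_p H̃ - K_i I, H̃) are exponentially stable. -/
open Matrix

lemma aux_pos {m : ℕ} {M : Matrix (Fin m) (Fin m) ℝ} (hM : M.PosDef)
    (y : Fin m → ℂ) (hy : y ≠ 0) :
    ∃ r : ℝ, 0 < r ∧ star y ⬝ᵥ ((M.map Complex.ofReal) *ᵥ y) = (r : ℂ) := by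
  classical
  set a : Fin m → ℝ := fun i => (y i).re with ha
  set b : Fin m → ℝ := fun i => (y i).im with hb
  set ac : Fin m → ℂ := fun i => ((a i : ℝ) : ℂ) with hac
  set bc : Fin m → ℂ := fun i => ((b i : ℝ) : ℂ) with hbc
  set M' := M.map Complex.ofReal with hM'
  have hyd : y = ac + Complex.I • bc := by
    funext i; simp [ac, bc, a, b, Complex.ext_iff]
  have hsty : star y = ac - Complex.I • bc := by
    funext i; simp [ac, bc, a, b, Complex.ext_iff]
  have hmap : ∀ u v : Fin m → ℝ,
      (fun i => ((u i : ℝ) : ℂ)) ⬝ᵥ (M' *ᵥ fun i => ((v i : ℝ) : ℂ)) = ((u ⬝ᵥ (M *ᵥ v) : ℝ) : ℂ) := by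
    intro u v
    have := RingHom.map_dotProduct Complex.ofRealHom u (M *ᵥ v)
    have h2 : (⇑Complex.ofRealHom ∘ (M *ᵥ v)) = M' *ᵥ (⇑Complex.ofRealHom ∘ v) := by
      funext i; exact RingHom.map_mulVec Complex.ofRealHom M v i
    rw [h2] at this
    exact this.symm
  have hsymm : Mᵀ = M := hM.1
  have hsw : ∀ u v : Fin m → ℝ, u ⬝ᵥ (M *ᵥ v) = v ⬝ᵥ (M *ᵥ u) := by
    intro u v
    rw [dotProduct_mulVec, ← hsymm, vecMul_transpose, hsymm, dotProduct_comm]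
  have expand : star y ⬝ᵥ (M' *ᵥ y)
      = ((a ⬝ᵥ (M *ᵥ a) + b ⬝ᵥ (M *ᵥ b) : ℝ) : ℂ) := by
    rw [hsty, hyd]
    rw [mulVec_add, mulVec_smul, sub_dotProduct, dotProduct_add, dotProduct_add,
      smul_dotProduct, smul_dotProduct, dotProduct_smul, dotProduct_smul]
    have e1 := hmap a a
    have e2 := hmap a b
    have e3 := hmap b a
    have e4 := hmap b b
    simp only [hac, hbc] at *
    rw [e1, e2, e3, e4, hsw b a]
    push_cast
    simp only [smul_eq_mul, ← mul_assoc, Complex.I_mul_I]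
    ring
  refine ⟨a ⬝ᵥ (M *ᵥ a) + b ⬝ᵥ (M *ᵥ b), ?_, expand⟩
  have hab : a ≠ 0 ∨ b ≠ 0 := by
    by_contra h
    push_neg at h
    apply hy
    funext i
    have h1 : a i = 0 := congrFun h.1 i
    have h2 : b i = 0 := congrFun h.2 i
    simp [Complex.ext_iff]; exact ⟨h1, h2⟩
  have hpos : ∀ x : Fin m → ℝ, x ≠ 0 → 0 < x ⬝ᵥ (M *ᵥ x) := by
    intro x hx
    have := hM.dotProduct_mulVec_pos hx
    simpa using this
  have hnn : ∀ x : Fin m → ℝ, 0 ≤ x ⬝ᵥ (M *ᵥ x) := by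
    intro x
    have := hM.posSemidef.dotProduct_mulVec_nonneg x
    simpa using this
  rcases hab with h | h
  · exact add_pos_of_pos_of_nonneg (hpos a h) (hnn b)
  · exact add_pos_of_nonneg_of_pos (hnn a) (hpos b h)
open Matrix

lemma quad_root_neg_re {p q : ℝ} (hp : 0 < p) (hq : 0 < q) {lam : ℂ}
    (h : lam ^ 2 + (p : ℂ) * lam + (q : ℂ) = 0) : lam.re < 0 := by
  set a := lam.re
  set b := lam.im
  have hre : a ^ 2 - b ^ 2 + p * a + q = 0 := by
    have := congrArg Complex.re h
    simpa [Complex.add_re, pow_two, Complex.mul_re, Complex.mul_im, a, b] using this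
  have him : 2 * a * b + p * b = 0 := by
    have := congrArg Complex.im h
    simp [Complex.add_im, pow_two, Complex.mul_re, Complex.mul_im, a, b] at this
    linarith
  by_contra hge
  push_neg at hge
  have hb : b = 0 := by
    have h2 : b * (2 * a + p) = 0 := by linarith
    rcases mul_eq_zero.mp h2 with h | h
    · exact h
    · linarith
  rw [hb] at hre
  nlinarith
open Matrix

theorem stmt_12 (n : ℕ) (K_p K_i : Matrix (Fin n) (Fin n) ℝ)
    (hKp : K_p.PosDef) (hKi : K_i.PosDef) :
    let A : Matrix (Fin n ⊕ Fin n) (Fin n ⊕ Fin n) ℝ :=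
      Matrix.fromBlocks (-K_p) (-K_i) 1 0
    ∀ lam : ℂ, lam ∈ spectrum ℂ (A.map (Complex.ofReal)) → lam.re < 0 := by
  intro A lam hlam
  classical
  -- eigenvector
  obtain ⟨v, hv0, hv⟩ : ∃ v : Fin n ⊕ Fin n → ℂ, v ≠ 0 ∧ (A.map Complex.ofReal) *ᵥ v = lam • v := by
    rw [spectrum.mem_iff, Matrix.isUnit_iff_isUnit_det, isUnit_iff_ne_zero, not_not] at hlam
    obtain ⟨v, hv0, hv⟩ := Matrix.exists_mulVec_eq_zero_iff.mpr hlam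
    refine ⟨v, hv0, ?_⟩
    rw [sub_mulVec, sub_eq_zero] at hv
    rw [← hv]
    ext i
    simp [Matrix.algebraMap_eq_diagonal, mulVec_diagonal]
  set Kp' := K_p.map Complex.ofReal with hKp'
  set Ki' := K_i.map Complex.ofReal with hKi'
  have hAmap : A.map Complex.ofReal = Matrix.fromBlocks (-Kp') (-Ki') 1 0 := by
    have hone : (1 : Matrix (Fin n) (Fin n) ℝ).map Complex.ofReal = 1 := by
      ext i j; simp [Matrix.one_apply, apply_ite]
    have hzero : (0 : Matrix (Fin n) (Fin n) ℝ).map Complex.ofReal = 0 := by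
      ext i j; simp
    have hneg : ∀ M : Matrix (Fin n) (Fin n) ℝ,
        (-M).map Complex.ofReal = -(M.map Complex.ofReal) := by
      intro M; ext i j; simp
    rw [show A = Matrix.fromBlocks (-K_p) (-K_i) 1 0 from rfl, Matrix.fromBlocks_map,
      hone, hzero, hneg, hneg]
  set x : Fin n → ℂ := v ∘ Sum.inl with hx
  set y : Fin n → ℂ := v ∘ Sum.inr with hy
  rw [hAmap, Matrix.fromBlocks_mulVec] at hv
  have h1 : (-Kp') *ᵥ x + (-Ki') *ᵥ y = lam • x := by
    funext i
    have := congrFun hv (Sum.inl i)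
    simpa [hx, hy] using this
  have h2 : x = lam • y := by
    funext i
    have := congrFun hv (Sum.inr i)
    simpa [Matrix.one_mulVec, hx, hy] using this
  have hyne : y ≠ 0 := by
    intro h
    apply hv0
    have hx0 : x = 0 := by rw [h2, h, smul_zero]
    funext i
    cases i with
    | inl j => exact congrFun hx0 j
    | inr j => exact congrFun h j
  obtain ⟨p, hp, hpeq⟩ := aux_pos hKp y hyne
  obtain ⟨q, hq, hqeq⟩ := aux_pos hKi y hyne
  obtain ⟨s, hs, hseq⟩ := aux_pos (Matrix.PosDef.one (n := Fin n) (R := ℝ)) y hyne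
  have hseq' : star y ⬝ᵥ y = (s : ℂ) := by
    rw [← hseq]
    congr 1
    have : (1 : Matrix (Fin n) (Fin n) ℝ).map Complex.ofReal = 1 := by
      ext i j; simp [Matrix.one_apply, apply_ite]
    rw [this, Matrix.one_mulVec]
  -- key equation
  have key : lam ^ 2 * s + lam * p + q = 0 := by
    have h3 := congrArg (fun w => star y ⬝ᵥ w) h1
    simp only [h2, dotProduct_add, neg_mulVec, dotProduct_neg, mulVec_smul,
      dotProduct_smul, smul_eq_mul] at h3
    rw [← hKp'] at hpeq
    rw [← hKi'] at hqeq
    rw [hpeq, hqeq, hseq'] at h3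
    linear_combination -h3
  -- transform to monic quadratic
  have hsne : (s : ℂ) ≠ 0 := by exact_mod_cast hs.ne'
  have key2 : lam ^ 2 + ((p / s : ℝ) : ℂ) * lam + ((q / s : ℝ) : ℂ) = 0 := by
    push_cast
    field_simp
    linear_combination key
  exact quad_root_neg_re (div_pos hp hs) (div_pos hq hs) key2
end
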